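/- Let (aₙ) be any strictly decreasing computable sequence of positive rationals converging to 0. Define sₙ := aₘ for the least m ≤ n such that the m-th Turing machine Tₘ halts on input m in exactly n steps, and sₙ := 0 if no such m exists. Then sₙ → 0 but (sₙ) has no computable rate of convergence. -/

import Mathlib

open Filter Finset

/-- `haltsInExactly m n` means: the `m`-th Turing machine (partial recursive
code) halts on input `m` in exactly `n` steps. -/
def haltsInExactly (m n : ℕ) : Prop :=
  (Nat.Partrec.Code.evaln (n + 1) (Denumerable.ofNat Nat.Partrec.Code m) m).isSome ∧
    ¬(Nat.Partrec.Code.evaln n (Denumerable.ofNat Nat.Partrec.Code m) m).isSome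

open Nat.Partrec.Code in
lemma haltsInExactly.le {m n : ℕ} (h : haltsInExactly m n) : m ≤ n := by
  obtain ⟨x, hx⟩ := Option.isSome_iff_exists.1 h.1
  exact Nat.lt_succ_iff.1 (evaln_bound (hx : x ∈ _))

open Nat.Partrec.Code in
lemma haltsInExactly.unique {m n n' : ℕ} (h : haltsInExactly m n)
    (h' : haltsInExactly m n') : n = n' := by
  by_contra hne
  rcases Nat.lt_or_ge n n' with hlt | hge
  · obtain ⟨x, hx⟩ := Option.isSome_iff_exists.1 h.1
    exact h'.2 (Option.isSome_iff_exists.2 ⟨x, evaln_mono hlt (hx : x ∈ _)⟩)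
  · rcases Nat.lt_or_ge n' n with hlt | hge'
    · obtain ⟨x, hx⟩ := Option.isSome_iff_exists.1 h'.1
      exact h.2 (Option.isSome_iff_exists.2 ⟨x, evaln_mono hlt (hx : x ∈ _)⟩)
    · exact hne (le_antisymm hge' hge)

/-- Let (aₙ) be a strictly decreasing computable sequence of positive rationals
converging to 0, and define sₙ := aₘ for the least m ≤ n such that Tₘ halts on
input m in exactly n steps (sₙ := 0 if no such m exists).  Then sₙ → 0, but
(sₙ) has no computable rate of convergence. -/
theorem stmt10 (a : ℕ → ℚ) (ha : Computable a)
    (hpos : ∀ n, 0 < a n) (hdec : ∀ n, a (n + 1) < a n)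
    (hlim : Tendsto (fun n => (a n : ℝ)) atTop (nhds 0))
    (s : ℕ → ℚ)
    (hs₁ : ∀ n m : ℕ, m ≤ n → haltsInExactly m n →
      (∀ k < m, ¬haltsInExactly k n) → s n = a m)
    (hs₂ : ∀ n : ℕ, (∀ m ≤ n, ¬haltsInExactly m n) → s n = 0) :
    Tendsto (fun n => (s n : ℝ)) atTop (nhds 0) ∧
      ¬∃ φ : ℚ → ℕ, Computable φ ∧
        ∀ ε : ℚ, 0 < ε → ∀ n, φ ε ≤ n → s n ≤ ε := by
  classical
  have hanti : StrictAnti a := strictAnti_nat_of_succ_lt hdec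
  -- the value of s at n, when some machine halts exactly at time n
  have key : ∀ n : ℕ, (∃ m, haltsInExactly m n) →
      ∀ h : ∃ m, haltsInExactly m n, s n = a (Nat.find h) := by
    intro n _ h
    exact hs₁ n (Nat.find h) (Nat.find_spec h).le (Nat.find_spec h)
      (fun k hk => Nat.find_min h hk)
  constructor
  · rw [Metric.tendsto_atTop]
    intro ε hε
    obtain ⟨M, hM⟩ := Metric.tendsto_atTop.1 hlim ε hε
    have haM : (a M : ℝ) < ε := by
      have := hM M le_rfl
      rw [Real.dist_eq, sub_zero, abs_of_pos (by exact_mod_cast hpos M)] at this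
      exact this
    -- bound the (unique) halting times of machines `m ≤ M`
    set T : ℕ → ℕ := fun m =>
      if h : ∃ n, haltsInExactly m n then h.choose + 1 else 0 with hT
    refine ⟨(Finset.range (M + 1)).sup T, fun n hn => ?_⟩
    by_cases hex : ∃ m, haltsInExactly m n
    · have hs := key n hex hex
      set m₀ := Nat.find hex with hm₀
      have hhalt : haltsInExactly m₀ n := Nat.find_spec hex
      rcases Nat.lt_or_ge M m₀ with hMm | hmM
      · -- m₀ > M, so s n = a m₀ < a M < ε
        have h1 : a m₀ < a M := hanti hMm
        have h2 : (0:ℝ) < (a m₀ : ℝ) := by exact_mod_cast hpos m₀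
        rw [hs, Real.dist_eq, sub_zero, abs_of_pos h2]
        calc ((a m₀ : ℝ)) < (a M : ℝ) := by exact_mod_cast h1
          _ < ε := haM
      · -- m₀ ≤ M: n is the unique halting time of m₀, contradicting n ≥ N
        exfalso
        have hdom : ∃ k, haltsInExactly m₀ k := ⟨n, hhalt⟩
        have hTm : T m₀ = hdom.choose + 1 := by simp [hT, hdom]
        have hch : haltsInExactly m₀ hdom.choose := hdom.choose_spec
        have : n = hdom.choose := hhalt.unique hch
        have hle : T m₀ ≤ (Finset.range (M + 1)).sup T :=
          Finset.le_sup (Finset.mem_range.2 (Nat.lt_succ_of_le hmM))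
        omega
    · push_neg at hex
      rw [hs₂ n (fun m _ hm => hex m hm)]
      simpa using hε
  · rintro ⟨φ, hφ, hprop⟩
    -- the computable "decider" for the diagonal halting problem
    set c : ℕ → Nat.Partrec.Code := fun m => Denumerable.ofNat Nat.Partrec.Code m with hc
    have hiff : ∀ m : ℕ,
        (Nat.Partrec.Code.evaln (φ (a (m + 1))) (c m) m).isSome = true ↔
          (Nat.Partrec.Code.eval (c m) m).Dom := by
      intro m
      constructor
      · intro h
        obtain ⟨x, hx⟩ := Option.isSome_iff_exists.1 h
        exact Part.dom_iff_mem.2 ⟨x, Nat.Partrec.Code.evaln_sound (hx : x ∈ _)⟩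
      · intro h
        obtain ⟨x, hx⟩ := Part.dom_iff_mem.1 h
        obtain ⟨k, hk⟩ := Nat.Partrec.Code.evaln_complete.1 hx
        have hex : ∃ k, (Nat.Partrec.Code.evaln k (c m) m).isSome :=
          ⟨k, Option.isSome_iff_exists.2 ⟨x, hk⟩⟩
        set k₀ := Nat.find hex with hk₀
        have hk₀s : (Nat.Partrec.Code.evaln k₀ (c m) m).isSome := Nat.find_spec hex
        have hk₀pos : 0 < k₀ := by
          rcases Nat.eq_zero_or_pos k₀ with h | h
          · exfalso; rw [h] at hk₀s; simp [Nat.Partrec.Code.evaln] at hk₀s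
          · exact h
        set n := k₀ - 1 with hn
        have hk₀n : k₀ = n + 1 := by omega
        have hhalt : haltsInExactly m n := by
          constructor
          · rw [← hk₀n]; exact hk₀s
          · exact Nat.find_min hex (by omega)
        have hmn : m ≤ n := hhalt.le
        have hexm : ∃ m', haltsInExactly m' n := ⟨m, hhalt⟩
        have hsn : s n = a (Nat.find hexm) := key n hexm hexm
        have hm'm : Nat.find hexm ≤ m := Nat.find_le hhalt
        have hlt : a (m + 1) < s n := by
          rw [hsn]
          exact lt_of_lt_of_le (hdec m) (hanti.antitone hm'm)
        have hnlt : n < φ (a (m + 1)) := by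
          by_contra hge
          exact absurd (hprop (a (m + 1)) (hpos _) n (le_of_not_gt hge))
            (not_le.2 hlt)
        obtain ⟨y, hy⟩ := Option.isSome_iff_exists.1 hk₀s
        refine Option.isSome_iff_exists.2 ⟨y, Nat.Partrec.Code.evaln_mono ?_ (Option.mem_def.2 hy)⟩
        omega
    -- computability of the decider
    have hf : Computable fun m : ℕ =>
        (Nat.Partrec.Code.evaln (φ (a (m + 1))) (c m) m).isSome := by
      have h1 : Computable fun m : ℕ => φ (a (m + 1)) :=
        hφ.comp (ha.comp Computable.succ)
      have h2 : Computable fun m : ℕ =>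
          Nat.Partrec.Code.evaln (φ (a (m + 1))) (c m) m :=
        Nat.Partrec.Code.primrec_evaln.to_comp.comp
          ((h1.pair (Computable.ofNat _)).pair Computable.id)
      exact Primrec.option_isSome.to_comp.comp h2
    -- diagonal halting predicate is computable
    have hK : ComputablePred fun m : ℕ => (Nat.Partrec.Code.eval (c m) m).Dom := by
      rw [ComputablePred.computable_iff]
      exact ⟨_, hf, by funext m; exact (propext (hiff m)).symm⟩
    -- reduce the standard halting problem to the diagonal one
    apply ComputablePred.halting_problem 0
    obtain ⟨f, hfc, hfe⟩ := ComputablePred.computable_iff.1 hK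
    rw [ComputablePred.computable_iff]
    refine ⟨fun d => f (Encodable.encode (d.comp (Nat.Partrec.Code.const 0))),
      hfc.comp (Primrec.encode.comp
        (Nat.Partrec.Code.primrec₂_comp.comp Primrec.id
          (Primrec.const (Nat.Partrec.Code.const 0)))).to_comp, ?_⟩
    funext d
    have h1 : (fun m : ℕ => (Nat.Partrec.Code.eval (c m) m).Dom)
        (Encodable.encode (d.comp (Nat.Partrec.Code.const 0))) =
        (f (Encodable.encode (d.comp (Nat.Partrec.Code.const 0))) : Prop) := by
      rw [hfe]
    rw [← h1]
    simp only [hc, Denumerable.ofNat_encode]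
    apply propext
    simp only [Nat.Partrec.Code.eval]
    exact ⟨fun h => ⟨trivial, h⟩, fun ⟨_, h⟩ => h⟩
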